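/- In the exponential instance, let π be any valid free-fall dynamic linear contract whose first segment has α^1 = α_{i−1,i} and a^1 = i for some 2 ≤ i ≤ n−1 (i.e., π begins at an indifference point strictly below the top indifference point α_{n−1,n}). Then there exists a valid free-fall dynamic linear contract π′ with Util(π′) > Util(π). Consequently, any optimal free-fall contract for this instance must begin at the top indifference point α_{n−1,n}. -/

import Mathlib

open Finset

/-- Indifference point `α_{i,i+1}` between actions `i` and `i+1`. -/
noncomputable def indiff (c R : ℕ → ℝ) (i : ℕ) : ℝ :=
  (c (i + 1) - c i) / (R (i + 1) - R i)

/-- Breakpoint `α_{i,i+1}` with the convention `α_{0,1} := 0`. -/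
noncomputable def bp (c R : ℕ → ℝ) (i : ℕ) : ℝ :=
  if i = 0 then 0 else indiff c R i

/-- A linear contract instance with `n ≥ 2` actions indexed `1,…,n`:
costs `0 = c_1 < … < c_n`, rewards `0 ≤ R_1 < … < R_n`, and indifference
points satisfying `0 < α_{1,2} < … < α_{n-1,n} ≤ 1`. -/
def LinInstance (n : ℕ) (c R : ℕ → ℝ) : Prop :=
  2 ≤ n ∧ c 1 = 0 ∧ 0 ≤ R 1 ∧
    (∀ i, 1 ≤ i → i < n → c i < c (i + 1)) ∧
    (∀ i, 1 ≤ i → i < n → R i < R (i + 1)) ∧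
    0 < indiff c R 1 ∧
    (∀ i, 1 ≤ i → i + 1 ≤ n - 1 → indiff c R i < indiff c R (i + 1)) ∧
    indiff c R (n - 1) ≤ 1

/-- Best-response set of the agent to the linear contract with scalar `x`. -/
def BR (n : ℕ) (c R : ℕ → ℝ) (x : ℝ) : Set ℕ :=
  {i | i ∈ Finset.Icc 1 n ∧ ∀ j ∈ Finset.Icc 1 n, x * R j - c j ≤ x * R i - c i}

/-- A dynamic linear contract with `K` segments (indexed `1,…,K`):
scalars `α`, durations `τ`, and actions `a`. -/
structure DLC where
  K : ℕ
  α : ℕ → ℝ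
  τ : ℕ → ℝ
  a : ℕ → ℕ

namespace DLC

/-- Total duration of the first `k` segments. -/
noncomputable def Tsum (π : DLC) (k : ℕ) : ℝ := ∑ j ∈ Finset.Icc 1 k, π.τ j

/-- Cumulative scalar contract of the first `k` segments. -/
noncomputable def Asum (π : DLC) (k : ℕ) : ℝ := ∑ j ∈ Finset.Icc 1 k, π.α j * π.τ j

/-- Time-averaged contract `ᾱ^k` after the first `k` segments. -/
noncomputable def avg (π : DLC) (k : ℕ) : ℝ := π.Asum k / π.Tsum k

/-- Validity: positive durations, nonnegative scalars, actions in `{1,…,n}`,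
and each action is a best response to the historical average contract at the
end of its segment, and (for `k ≥ 2`) also at its beginning. -/
def Valid (n : ℕ) (c R : ℕ → ℝ) (π : DLC) : Prop :=
  1 ≤ π.K ∧
    (∀ k ∈ Finset.Icc 1 π.K, 0 ≤ π.α k ∧ 0 < π.τ k ∧ π.a k ∈ Finset.Icc 1 n) ∧
    (∀ k ∈ Finset.Icc 1 π.K, π.a k ∈ BR n c R (π.avg k)) ∧
    (∀ k, 2 ≤ k → k ≤ π.K → π.a k ∈ BR n c R (π.avg (k - 1)))

/-- Time-averaged principal utility. -/
noncomputable def Util (R : ℕ → ℝ) (π : DLC) : ℝ :=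
  (∑ k ∈ Finset.Icc 1 π.K, π.τ k * (1 - π.α k) * R (π.a k)) / π.Tsum π.K

/-- Time-averaged agent utility. -/
noncomputable def UtilA (c R : ℕ → ℝ) (π : DLC) : ℝ :=
  (∑ k ∈ Finset.Icc 1 π.K, π.τ k * (π.α k * R (π.a k) - c (π.a k))) / π.Tsum π.K

/-- Free-fall: the zero contract is offered on every segment after the first. -/
def FreeFall (π : DLC) : Prop := ∀ k, 2 ≤ k → k ≤ π.K → π.α k = 0

/-- Cumulative principal utility `u_P^{(t)}(π)` up to time `t`. -/
noncomputable def cumUtil (R : ℕ → ℝ) (π : DLC) (t : ℝ) : ℝ :=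
  ∑ k ∈ Finset.Icc 1 π.K,
    (min t (π.Tsum k) - min t (π.Tsum (k - 1))) * (1 - π.α k) * R (π.a k)

/-- Cumulative scalar contract `A^{(t)}` up to time `t`. -/
noncomputable def cumA (π : DLC) (t : ℝ) : ℝ :=
  ∑ k ∈ Finset.Icc 1 π.K, (min t (π.Tsum k) - min t (π.Tsum (k - 1))) * π.α k

end DLC

/-- Expected rewards of the exponential instance: `R_i = 2^i`. -/
noncomputable def expoR : ℕ → ℝ := fun i => 2 ^ i

/-- Costs of the exponential instance: `c_1 = 0` and
`c_i = c_{i-1} + R_{i-1} − 1/2` for `i ≥ 2`; in closed form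
`c_i = (2^i − 2) − (i − 1)/2`. -/
noncomputable def expoC : ℕ → ℝ := fun i =>
  if i ≤ 1 then 0 else ((2 : ℝ) ^ i - 2) - ((i : ℝ) - 1) / 2


section Aux

lemma sum_Icc_succ_left (g : ℕ → ℝ) (a b : ℕ) (h : a ≤ b) :
    ∑ j ∈ Finset.Icc a b, g j = g a + ∑ j ∈ Finset.Icc (a+1) b, g j := by
  rw [← Finset.Ioc_insert_left h, Finset.sum_insert (by simp), Finset.Icc_add_one_left_eq_Ioc]

lemma sum_Icc_shift (g : ℕ → ℝ) (a b : ℕ) :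
    ∑ j ∈ Finset.Icc (a+1) (b+1), g j = ∑ j ∈ Finset.Icc a b, g (j+1) := by
  rw [← Finset.map_add_right_Icc, Finset.sum_map]
  rfl

lemma indiff_formula (j : ℕ) (hj : 1 ≤ j) :
    indiff expoC expoR j = 1 - 1/2^(j+1) := by
  have hpj : (0:ℝ) < 2^j := by positivity
  rcases eq_or_lt_of_le hj with h | h
  · subst h
    norm_num [indiff, expoC, expoR]
  · have hc1 : ¬ (j ≤ 1) := by omega
    have hc2 : ¬ (j + 1 ≤ 1) := by omega
    simp only [indiff, expoC, expoR, if_neg hc1, if_neg hc2]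
    have hp : (2:ℝ)^(j+1) = 2 * 2^j := by rw [pow_succ]; ring
    push_cast
    rw [hp, show (2:ℝ) * 2^j - 2^j = 2^j by ring, div_eq_iff hpj.ne']
    field_simp
    ring

lemma claimC (i j : ℕ) : (2:ℝ)^i * ((j:ℝ) - i + 1) ≤ 2^j := by
  have hpj : (0:ℝ) < 2^j := by positivity
  have hpi : (0:ℝ) < 2^i := by positivity
  rcases lt_trichotomy j i with h | rfl | h
  · have hji : (j:ℝ) + 1 ≤ i := by exact_mod_cast h
    have hm : ((j:ℝ) - i + 1) ≤ 0 := by linarith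
    nlinarith
  · simp
  · have hd : i ≤ j := le_of_lt h
    have hsplit : (2:ℝ)^j = 2^i * 2^(j-i) := by
      rw [← pow_add]; congr 1; omega
    have hb : ((j - i : ℕ):ℝ) + 1 ≤ 2^(j-i) := by
      have h2 := Nat.lt_two_pow_self (n := j - i)
      have : ((j-i:ℕ):ℝ) + 1 ≤ ((2^(j-i) : ℕ) : ℝ) := by exact_mod_cast h2
      simpa using this
    have hcast : ((j:ℝ) - i + 1) = ((j-i:ℕ):ℝ) + 1 := by
      push_cast [Nat.cast_sub hd]; ring
    rw [hsplit, hcast]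
    nlinarith

lemma val_at (x : ℝ) (j : ℕ) (hj : 2 ≤ j) :
    x * expoR j - expoC j = x * 2^j - (2^j - 2 - ((j:ℝ)-1)/2) := by
  simp only [expoR, expoC, if_neg (by omega : ¬ j ≤ 1)]

lemma mem_BR_top (n i : ℕ) (hi : 2 ≤ i) (hin : i + 1 ≤ n) :
    (i+1) ∈ BR n expoC expoR (indiff expoC expoR i) ∧
    i ∈ BR n expoC expoR (indiff expoC expoR i) := by
  have hx : indiff expoC expoR i = 1 - 1/2^(i+1) := indiff_formula i (by omega)
  set x := indiff expoC expoR i with hxdef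
  have hp1 : (0:ℝ) < 2^(i+1) := by positivity
  have hpi : (0:ℝ) < 2^i := by positivity
  have hps : (2:ℝ)^(i+1) = 2*2^i := by rw [pow_succ]; ring
  have hvi1 : x * expoR (i+1) - expoC (i+1) = 1 + (i:ℝ)/2 := by
    rw [val_at x (i+1) (by omega), hx]
    push_cast
    field_simp
    ring
  have hvi : x * expoR i - expoC i = 1 + (i:ℝ)/2 := by
    rw [val_at x i hi, hx, hps]
    field_simp
    ring
  have hub : ∀ j ∈ Finset.Icc 1 n, x * expoR j - expoC j ≤ 1 + (i:ℝ)/2 := by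
    intro j hj
    obtain ⟨hj1, hjn⟩ := Finset.mem_Icc.mp hj
    rcases eq_or_lt_of_le hj1 with h | hj2
    · subst h
      simp only [expoR, expoC, if_pos (le_refl 1)]
      rw [hx]
      have hic : (2:ℝ) ≤ (i:ℝ) := by exact_mod_cast hi
      have h01 : (0:ℝ) < ((2:ℝ)^(i+1))⁻¹ := by positivity
      norm_num
      nlinarith
    · have hj2' : 2 ≤ j := hj2
      rw [val_at x j hj2', hx]
      have hC := claimC i j
      have hdiv : ((j:ℝ) - i + 1) / 2 ≤ 2^j / 2^(i+1) := by
        rw [div_le_div_iff₀ (by norm_num) hp1, hps]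
        nlinarith
      have hexp : (1 - 1/2^(i+1)) * 2^j - (2^j - 2 - ((j:ℝ)-1)/2)
          = 2 + ((j:ℝ)-1)/2 - 2^j/2^(i+1) := by
        field_simp
        ring
      rw [hexp]
      linarith
  constructor
  · exact ⟨Finset.mem_Icc.mpr ⟨by omega, hin⟩, fun j hj => by rw [hvi1]; exact hub j hj⟩
  · exact ⟨Finset.mem_Icc.mpr ⟨by omega, by omega⟩, fun j hj => by rw [hvi]; exact hub j hj⟩

/-- The replacement contract: first segment `(A, s, i+1)`, second `(0, u, i)`,
then the segments `2,…,K` of `π` shifted by one. -/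
noncomputable def augment (π : DLC) (A s u : ℝ) (i : ℕ) : DLC where
  K := π.K + 1
  α := fun k => if k = 1 then A else 0
  τ := fun k => if k = 1 then s else if k = 2 then u else π.τ (k-1)
  a := fun k => if k = 1 then i+1 else if k = 2 then i else π.a (k-1)

lemma augment_K (π : DLC) (A s u : ℝ) (i : ℕ) : (augment π A s u i).K = π.K + 1 := rfl
lemma augment_α (π : DLC) (A s u : ℝ) (i k : ℕ) :
    (augment π A s u i).α k = if k = 1 then A else 0 := rfl
lemma augment_τ (π : DLC) (A s u : ℝ) (i k : ℕ) :
    (augment π A s u i).τ k = if k = 1 then s else if k = 2 then u else π.τ (k-1) := rfl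
lemma augment_a (π : DLC) (A s u : ℝ) (i k : ℕ) :
    (augment π A s u i).a k = if k = 1 then i+1 else if k = 2 then i else π.a (k-1) := rfl

end Aux

/-- In the exponential instance, any valid free-fall dynamic
linear contract starting at an indifference point `α_{i-1,i}` with
`2 ≤ i ≤ n − 1` (strictly below the top indifference point) is strictly
dominated by some valid free-fall contract. -/
theorem exponential_must_start_at_top (n : ℕ) (hn : 4 ≤ n)
    (π : DLC) (hπ : π.Valid n expoC expoR) (hff : π.FreeFall)
    (i : ℕ) (hi2 : 2 ≤ i) (hin : i ≤ n - 1)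
    (hα1 : π.α 1 = indiff expoC expoR (i - 1)) (ha1 : π.a 1 = i) :
    ∃ π' : DLC, π'.Valid n expoC expoR ∧ π'.FreeFall ∧
      π'.Util expoR > π.Util expoR := by
  obtain ⟨hK, hbasic, hBRa, hBRb⟩ := hπ
  have hi1n : i + 1 ≤ n := by omega
  have h1K : (1:ℕ) ∈ Finset.Icc 1 π.K := Finset.mem_Icc.mpr ⟨le_refl 1, hK⟩
  obtain ⟨hα1nn, hτ1, ha1mem⟩ := hbasic 1 h1K
  have hAval : indiff expoC expoR i = 1 - 1/2^(i+1) := indiff_formula i (by omega)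
  have hBval : indiff expoC expoR (i-1) = 1 - 1/2^i := by
    have h := indiff_formula (i-1) (by omega)
    rwa [show i - 1 + 1 = i by omega] at h
  set A := indiff expoC expoR i with hAdef
  have hp1 : (0:ℝ) < 2^(i+1) := by positivity
  have hpi : (0:ℝ) < 2^i := by positivity
  have hps : (2:ℝ)^(i+1) = 2*2^i := by rw [pow_succ]; ring
  have h2i : (4:ℝ) ≤ 2^i := by
    calc (4:ℝ) = 2^2 := by norm_num
    _ ≤ 2^i := pow_le_pow_right₀ (by norm_num) hi2
  have hApos : 0 < A := by
    rw [hAval, hps]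
    have : 1/(2*(2:ℝ)^i) ≤ 1/2 := by
      rw [div_le_div_iff₀ (by positivity) (by norm_num)]; nlinarith
    linarith
  have hBpos : 0 < π.α 1 := by
    rw [hα1, hBval]
    have : 1/((2:ℝ)^i) ≤ 1/2 := by
      rw [div_le_div_iff₀ (by positivity) (by norm_num)]; nlinarith
    linarith
  have hBA : π.α 1 < A := by
    rw [hα1, hBval, hAval, hps]
    have h2 : 1/(2*(2:ℝ)^i) < 1/2^i := by
      rw [div_lt_div_iff₀ (by positivity) hpi]; nlinarith
    linarith
  set s := π.τ 1 * π.α 1 / A with hsdef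
  set u := π.τ 1 - s with hudef
  have hspos : 0 < s := div_pos (mul_pos hτ1 hBpos) hApos
  have hsA : s * A = π.τ 1 * π.α 1 := by
    rw [hsdef]; field_simp
  have hslt : s < π.τ 1 := by
    rw [hsdef, div_lt_iff₀ hApos]
    nlinarith
  have hupos : 0 < u := by rw [hudef]; linarith
  have hsu : s + u = π.τ 1 := by rw [hudef]; ring
  set ρ := augment π A s u i with hρdef
  -- sums of the new contract
  have hT1 : ρ.Tsum 1 = s := by
    simp [DLC.Tsum, hρdef, augment_τ]
  have hTs : ∀ k, 1 ≤ k → ρ.Tsum (k+1) = π.Tsum k := by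
    intro k hk
    rw [DLC.Tsum, DLC.Tsum, sum_Icc_succ_left _ 1 (k+1) (by omega),
      sum_Icc_succ_left _ 2 (k+1) (by omega), sum_Icc_shift,
      sum_Icc_succ_left _ 1 k hk]
    have htail : ∑ j ∈ Finset.Icc 2 k, ρ.τ (j+1) = ∑ j ∈ Finset.Icc 2 k, π.τ j := by
      apply Finset.sum_congr rfl
      intro j hj
      obtain ⟨hj2, -⟩ := Finset.mem_Icc.mp hj
      simp only [hρdef, augment_τ, if_neg (by omega : ¬ j+1 = 1), if_neg (by omega : ¬ j+1 = 2),
        Nat.add_sub_cancel]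
    rw [htail]
    simp only [hρdef, augment_τ, if_pos rfl]
    norm_num
    linarith
  have hAs' : ∀ k, 1 ≤ k → ρ.Asum k = A * s := by
    intro k hk
    rw [DLC.Asum, Finset.sum_eq_single_of_mem 1 (Finset.mem_Icc.mpr ⟨le_refl 1, hk⟩)]
    · simp [hρdef, augment_α, augment_τ]
    · intro j hj hne
      simp [hρdef, augment_α, if_neg hne]
  have hAsπ : ∀ k, 1 ≤ k → k ≤ π.K → π.Asum k = π.α 1 * π.τ 1 := by
    intro k hk hkK
    rw [DLC.Asum, Finset.sum_eq_single_of_mem 1 (Finset.mem_Icc.mpr ⟨le_refl 1, hk⟩)]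
    intro j hj hne
    obtain ⟨hj1, hjk⟩ := Finset.mem_Icc.mp hj
    rw [hff j (by omega) (by omega), zero_mul]
  have havgπ1 : π.avg 1 = π.α 1 := by
    rw [DLC.avg, DLC.Asum, DLC.Tsum]
    simp only [Finset.Icc_self, Finset.sum_singleton]
    exact mul_div_cancel_right₀ _ hτ1.ne'
  have havg1 : ρ.avg 1 = A := by
    rw [DLC.avg, hAs' 1 (le_refl 1), hT1]
    exact mul_div_cancel_right₀ _ hspos.ne'
  have havg : ∀ k, 1 ≤ k → k ≤ π.K → ρ.avg (k+1) = π.avg k := by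
    intro k hk hkK
    rw [DLC.avg, DLC.avg, hAs' (k+1) (by omega), hTs k hk, hAsπ k hk hkK]
    congr 1
    linear_combination hsA
  refine ⟨ρ, ⟨?_, ?_, ?_, ?_⟩, ?_, ?_⟩
  · simp [hρdef, augment_K]
  · -- basic conditions
    intro k hk
    obtain ⟨hk1, hk2⟩ := Finset.mem_Icc.mp hk
    rw [hρdef, augment_K] at hk2
    by_cases h1 : k = 1
    · subst h1
      refine ⟨?_, ?_, ?_⟩
      · rw [show ρ.α 1 = A from rfl]; exact hApos.le
      · rw [show ρ.τ 1 = s from rfl]; exact hspos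
      · rw [show ρ.a 1 = i + 1 from rfl]
        exact Finset.mem_Icc.mpr ⟨by omega, hi1n⟩
    · by_cases h2 : k = 2
      · subst h2
        refine ⟨?_, ?_, ?_⟩
        · rw [show ρ.α 2 = 0 from rfl]
        · rw [show ρ.τ 2 = u from rfl]; exact hupos
        · rw [show ρ.a 2 = i from rfl]
          exact Finset.mem_Icc.mpr ⟨by omega, by omega⟩
      · obtain ⟨hb1, hb2, hb3⟩ := hbasic (k-1) (Finset.mem_Icc.mpr ⟨by omega, by omega⟩)
        have eα : ρ.α k = 0 := by
          rw [hρdef, augment_α, if_neg h1]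
        have eτ : ρ.τ k = π.τ (k-1) := by
          rw [hρdef, augment_τ, if_neg h1, if_neg h2]
        have ea : ρ.a k = π.a (k-1) := by
          rw [hρdef, augment_a, if_neg h1, if_neg h2]
        exact ⟨by rw [eα], by rw [eτ]; exact hb2, by rw [ea]; exact hb3⟩
  · -- BR at end of segment
    intro k hk
    obtain ⟨hk1, hk2⟩ := Finset.mem_Icc.mp hk
    rw [hρdef, augment_K] at hk2
    by_cases h1 : k = 1
    · subst h1
      rw [havg1, show ρ.a 1 = i + 1 from rfl]
      exact (mem_BR_top n i hi2 hi1n).1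
    · obtain ⟨m, rfl⟩ : ∃ m, k = m+1 := ⟨k-1, by omega⟩
      have hm1 : 1 ≤ m := by omega
      have hm2 : m ≤ π.K := by omega
      rw [havg m hm1 hm2]
      by_cases hm : m = 1
      · subst hm
        rw [show ρ.a (1+1) = i from rfl]
        have h := hBRa 1 h1K
        rwa [ha1] at h
      · rw [show ρ.a (m+1) = if m+1 = 1 then i+1 else if m+1 = 2 then i else π.a (m+1-1) from rfl,
          if_neg (by omega : ¬ m+1 = 1), if_neg (by omega : ¬ m+1 = 2), Nat.add_sub_cancel]
        exact hBRa m (Finset.mem_Icc.mpr ⟨hm1, hm2⟩)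
  · -- BR at beginning of segment
    intro k hk2 hkK
    rw [hρdef, augment_K] at hkK
    obtain ⟨m, rfl⟩ : ∃ m, k = m+1 := ⟨k-1, by omega⟩
    have hm1 : 1 ≤ m := by omega
    rw [Nat.add_sub_cancel]
    by_cases hm : m = 1
    · subst hm
      rw [havg1, show ρ.a (1+1) = i from rfl]
      exact (mem_BR_top n i hi2 hi1n).2
    · obtain ⟨l, rfl⟩ : ∃ l, m = l+1 := ⟨m-1, by omega⟩
      have hl1 : 1 ≤ l := by omega
      have hl2 : l ≤ π.K := by omega
      rw [havg l hl1 hl2,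
        show ρ.a (l+1+1) = if l+1+1 = 1 then i+1 else if l+1+1 = 2 then i else π.a (l+1+1-1) from rfl,
        if_neg (by omega : ¬ l+1+1 = 1), if_neg (by omega : ¬ l+1+1 = 2)]
      have h := hBRb (l+1) (by omega) (by omega)
      rwa [Nat.add_sub_cancel] at h
  · -- free fall
    intro k hk2 hkK
    rw [hρdef, augment_α, if_neg (by omega : ¬ k = 1)]
  · -- utility comparison
    have hTpos : 0 < π.Tsum π.K := by
      rw [DLC.Tsum]
      exact Finset.sum_pos (fun j hj => (hbasic j hj).2.1) ⟨1, h1K⟩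
    set S := ∑ j ∈ Finset.Icc 2 π.K, π.τ j * expoR (π.a j) with hS
    have hUπ : π.Util expoR = (π.τ 1 + S) / π.Tsum π.K := by
      rw [DLC.Util, sum_Icc_succ_left _ 1 π.K hK]
      congr 2
      · rw [hα1, hBval, ha1]
        simp only [expoR]
        field_simp
        ring
      · apply Finset.sum_congr rfl
        intro j hj
        obtain ⟨hj2, hjk⟩ := Finset.mem_Icc.mp hj
        rw [hff j hj2 hjk]
        ring
    have hUρ : ρ.Util expoR = (s + (u * 2^i + S)) / π.Tsum π.K := by
      rw [DLC.Util]
      rw [show ρ.K = π.K + 1 from rfl]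
      rw [hTs π.K hK]
      rw [sum_Icc_succ_left _ 1 (π.K+1) (by omega), sum_Icc_succ_left _ 2 (π.K+1) (by omega),
        sum_Icc_shift]
      congr 2
      · simp only [hρdef, augment_τ, augment_α, augment_a, if_pos rfl]
        rw [hAval]
        simp only [expoR]
        field_simp
        simp only [↓reduceIte]
        field_simp
        ring
      · congr 1
        · simp only [hρdef, augment_τ, augment_α, augment_a,
            if_neg (by norm_num : ¬ (2:ℕ) = 1), if_pos rfl]
          simp [expoR]
        · apply Finset.sum_congr rfl
          intro j hj
          obtain ⟨hj2, hjk⟩ := Finset.mem_Icc.mp hj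
          simp only [hρdef, augment_τ, augment_α, augment_a,
            if_neg (by omega : ¬ j+1 = 1), if_neg (by omega : ¬ j+1 = 2), Nat.add_sub_cancel]
          ring
    rw [hUπ, hUρ, gt_iff_lt, div_lt_div_iff₀ hTpos hTpos]
    have h4 : u * 4 ≤ u * 2^i := mul_le_mul_of_nonneg_left h2i hupos.le
    have hkey : π.τ 1 + S < s + (u * 2^i + S) := by linarith
    exact mul_lt_mul_of_pos_right hkey hTpos
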